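/- Let p be a prime and Λ = Σ_n λ_n φ_n ∈ ℚ[φ_{p_1},...,φ_{p_s}] a polynomial in commuting symbols (indexed by monomials n in the primes p_1,...,p_s). If Λ ⋆ l(T) ∈ ℤ_{p_k}[[T]] ⊗ ℚ for some k, where l(T) = Σ (-1)^{n-1}T^n/n and φ_n ⋆ T^m = T^{nm}, then Λ is divisible by φ_{p_k} - p_k in ℚ[φ_{p_1},...,φ_{p_s}]. -/

import Mathlib

noncomputable def Mfun {s : ℕ} (P : Fin s → ℕ) (k : Fin s) (e : Fin s → ℕ) : ℕ :=
  ∏ i ∈ Finset.univ.erase k, P i ^ e i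

noncomputable def eps (p r : ℕ) : ℚ := if p = 2 then -1 else (-1 : ℚ)^(r-1)

noncomputable def Sq {s : ℕ} (P : Fin s → ℕ) (k : Fin s) (Λ : MvPolynomial (Fin s) ℚ)
    (q : ℕ) : ℚ :=
  ∑ e ∈ Λ.support, Λ.coeff e *
    (if Mfun P k ⇑e ∣ q then eps (P k) (q / Mfun P k ⇑e) * (Mfun P k ⇑e) * (P k:ℚ) ^ (e k) else 0)

noncomputable def Tq {s : ℕ} (P : Fin s → ℕ) (k : Fin s) (Λ : MvPolynomial (Fin s) ℚ)
    (q : ℕ) : ℚ :=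
  ∑ e ∈ Λ.support, Λ.coeff e * (if Mfun P k ⇑e = q then (P k:ℚ) ^ (e k) else 0)

theorem Lsign (p : ℕ) (hp : p.Prime) (r a : ℕ) (hr : 0 < r) (ha : 0 < a) :
    ((-1 : ℚ)) ^ (r * p ^ a - 1) = eps p r := by
  rw [eps]
  by_cases h2 : p = 2
  · subst h2
    rw [if_pos rfl]
    have heven : Even (r * 2 ^ a) := (Nat.even_pow.mpr ⟨even_two, ha.ne'⟩).mul_left r
    have hge : 1 ≤ r * 2 ^ a := Nat.mul_pos hr (pow_pos hp.pos a)
    exact (Nat.Even.sub_odd hge heven odd_one).neg_one_pow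
  · rw [if_neg h2]
    have hpodd : Odd p := hp.odd_of_ne_two h2
    have hpa : Odd (p ^ a) := hpodd.pow
    rcases Nat.even_or_odd r with hre | hro
    · have h1 : Even (r * p ^ a) := hre.mul_right _
      have hge : 1 ≤ r * p ^ a := Nat.mul_pos hr (pow_pos hp.pos a)
      rw [(Nat.Even.sub_odd hge h1 odd_one).neg_one_pow,
        (Nat.Even.sub_odd hr hre odd_one).neg_one_pow]
    · have h1 : Odd (r * p ^ a) := hro.mul hpa
      rw [(Nat.Odd.sub_odd h1 odd_one).neg_one_pow,
        (Nat.Odd.sub_odd hro odd_one).neg_one_pow]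

theorem Mfun_not_dvd {s : ℕ} (P : Fin s → ℕ) (hP : ∀ i, (P i).Prime)
    (hinj : Function.Injective P) (k : Fin s) (e : Fin s → ℕ) :
    ¬ P k ∣ Mfun P k e := by
  intro h
  obtain ⟨i, hi, hdvd⟩ := (Nat.Prime.prime (hP k)).exists_mem_finset_dvd h
  have h1 : P k ∣ P i := (hP k).dvd_of_dvd_pow hdvd
  have h2 := hinj ((Nat.prime_dvd_prime_iff_eq (hP k) (hP i)).mp h1)
  exact (Finset.mem_erase.mp hi).1 h2.symm

theorem Mfun_pos {s : ℕ} (P : Fin s → ℕ) (hP : ∀ i, (P i).Prime) (k : Fin s) (e : Fin s → ℕ) :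
    0 < Mfun P k e :=
  Finset.prod_pos fun i _ => pow_pos (hP i).pos _

theorem Nfun_eq {s : ℕ} (P : Fin s → ℕ) (k : Fin s) (e : Fin s →₀ ℕ) :
    (e.prod fun i t => P i ^ t) = P k ^ e k * Mfun P k ⇑e := by
  rw [Finsupp.prod_fintype]
  · exact (Finset.mul_prod_erase Finset.univ (fun i => P i ^ e i) (Finset.mem_univ k)).symm
  · intro i; exact pow_zero _

theorem L2 {s : ℕ} (P : Fin s → ℕ) (hP : ∀ i, (P i).Prime) (hinj : Function.Injective P)
    (t : Finset (Fin s)) (a : Fin s → ℕ) (i₀ : Fin s) (h : i₀ ∈ t) :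
    (∏ i ∈ t, P i ^ a i).factorization (P i₀) = a i₀ := by
  have hne : ∀ i ∈ t, P i ^ a i ≠ 0 := fun i _ => pow_ne_zero _ (hP i).ne_zero
  rw [Nat.factorization_prod hne]
  have hfac : ∀ i, (P i ^ a i).factorization = Finsupp.single (P i) (a i) := by
    intro i; rw [(hP i).factorization_pow]
  simp only [hfac, Finset.sum_apply', Finsupp.single_apply]
  rw [Finset.sum_eq_single i₀]
  · simp
  · intro b _ hb; rw [if_neg (fun heq => hb (hinj heq))]
  · intro hc; exact absurd h hc

open MvPolynomial in
theorem L1 {s : ℕ} (k : Fin s) (a : ℚ) (Λ : MvPolynomial (Fin s) ℚ)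
    (h : MvPolynomial.aeval (fun i => if i = k then MvPolynomial.C a else MvPolynomial.X i) Λ = 0) :
    (MvPolynomial.X k - MvPolynomial.C a) ∣ Λ := by
  set σ : Fin s → MvPolynomial (Fin s) ℚ := fun i => if i = k then MvPolynomial.C a else MvPolynomial.X i with hσ
  have key : ∀ Q : MvPolynomial (Fin s) ℚ, (X k - C a) ∣ (Q - MvPolynomial.aeval σ Q) := by
    intro Q
    induction Q using MvPolynomial.induction_on with
    | C c => simp
    | add p q hp hq =>
      have : p + q - (MvPolynomial.aeval σ) (p + q) = (p - aeval σ p) + (q - aeval σ q) := by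
        simp [map_add]; ring
      rw [this]; exact dvd_add hp hq
    | mul_X p i hp =>
      have : p * X i - (MvPolynomial.aeval σ) (p * X i)
          = (p - aeval σ p) * X i + aeval σ p * (X i - σ i) := by
        simp [map_mul, hσ, MvPolynomial.aeval_X]; split_ifs <;> ring
      rw [this]
      refine dvd_add (Dvd.dvd.mul_right hp _) (Dvd.dvd.mul_left ?_ _)
      by_cases hik : i = k
      · subst hik; simp [hσ]
      · simp [hσ, hik]
  have hk := key Λ
  rwa [h, sub_zero] at hk

theorem termEq {s : ℕ} (P : Fin s → ℕ) (hP : ∀ i, (P i).Prime)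
    (hinj : Function.Injective P) (k : Fin s) (q N : ℕ) (hq : 0 < q) (e : Fin s →₀ ℕ)
    (hN : e k < N) :
    (if (e.prod fun i t => P i ^ t) ∣ (q * P k ^ N) ∧ (q * P k ^ N) ≠ 0
      then (-1:ℚ) ^ ((q * P k ^ N) / (e.prod fun i t => P i ^ t) - 1) /
        (((q * P k ^ N) / (e.prod fun i t => P i ^ t) : ℕ) : ℚ)
      else 0)
    = (if Mfun P k ⇑e ∣ q then eps (P k) (q / Mfun P k ⇑e) * (Mfun P k ⇑e) * (P k:ℚ) ^ (e k)
        else 0) / ((q:ℚ) * (P k:ℚ)^N) := by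
  set p := P k with hpdef
  have hpp := hP k
  set me := Mfun P k ⇑e with hme
  have hmpos := Mfun_pos P hP k ⇑e
  have hpme : ¬ p ∣ me := Mfun_not_dvd P hP hinj k ⇑e
  have hcop : Nat.Coprime me p := (Nat.coprime_comm.mp ((hP k).coprime_iff_not_dvd.mpr hpme))
  have hm0 : q * p ^ N ≠ 0 := (Nat.mul_pos hq (pow_pos hpp.pos N)).ne'
  rw [Nfun_eq P k e]
  by_cases hd : me ∣ q
  · have hdvd : p ^ e k * me ∣ q * p ^ N := by
      rw [mul_comm q (p ^ N)]
      exact mul_dvd_mul (pow_dvd_pow p hN.le) hd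
    rw [if_pos ⟨hdvd, hm0⟩, if_pos hd]
    set r₀ := q / me with hr₀
    have hr₀pos : 0 < r₀ := Nat.div_pos (Nat.le_of_dvd hq hd) hmpos
    have hqr : me * r₀ = q := Nat.mul_div_cancel' hd
    have hdivEq : (q * p ^ N) / (p ^ e k * me) = r₀ * p ^ (N - e k) := by
      rw [Nat.div_eq_iff_eq_mul_left (Nat.mul_pos (pow_pos hpp.pos _) hmpos) hdvd]
      calc q * p ^ N = (me * r₀) * (p ^ (e k) * p ^ (N - e k)) := by
            rw [hqr, ← pow_add, Nat.add_sub_cancel' hN.le]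
        _ = r₀ * p ^ (N - e k) * (p ^ e k * me) := by ring
    rw [hdivEq, Lsign p hpp r₀ (N - e k) hr₀pos (Nat.sub_pos_of_lt hN)]
    have hcast : ((r₀ * p ^ (N - e k) : ℕ) : ℚ) * ((me : ℚ) * (p:ℚ) ^ e k) = (q:ℚ) * (p:ℚ)^N := by
      push_cast
      rw [show ((r₀:ℚ) * (p:ℚ) ^ (N - e k)) * ((me:ℚ) * (p:ℚ) ^ e k)
          = ((me:ℚ) * r₀) * ((p:ℚ) ^ (N - e k) * (p:ℚ) ^ e k) from by ring,
        ← pow_add, Nat.sub_add_cancel hN.le]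
      exact_mod_cast congrArg (fun x : ℕ => (x : ℚ) * (p:ℚ)^N) hqr
    have hXne : ((r₀ * p ^ (N - e k) : ℕ) : ℚ) ≠ 0 := by
      have h := Nat.mul_pos hr₀pos (pow_pos hpp.pos (N - e k))
      exact_mod_cast h.ne'
    have hQP : (q:ℚ) * (p:ℚ)^N ≠ 0 := by
      have h1 : (0:ℚ) < q := by exact_mod_cast hq
      have h2 : (0:ℚ) < (p:ℚ) := by exact_mod_cast hpp.pos
      positivity
    rw [div_eq_div_iff hXne hQP]
    calc eps p r₀ * ((q:ℚ) * (p:ℚ)^N)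
        = eps p r₀ * (((r₀ * p ^ (N - e k) : ℕ) : ℚ) * ((me : ℚ) * (p:ℚ) ^ e k)) := by rw [hcast]
      _ = eps p r₀ * (me:ℚ) * (p:ℚ) ^ e k * ((r₀ * p ^ (N - e k) : ℕ) : ℚ) := by ring
  · have hndvd : ¬ (p ^ e k * me ∣ q * p ^ N ∧ q * p ^ N ≠ 0) := by
      rintro ⟨h1, -⟩
      exact hd ((hcop.pow_right N).dvd_of_dvd_mul_right (dvd_trans (dvd_mul_left me _) h1))
    rw [if_neg hndvd, if_neg hd, zero_div]

/-- Let `Λ = Σ_n λ_n φ_n ∈ ℚ[φ_{p_1},…,φ_{p_s}]` be a polynomial in commuting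
symbols, acting on `ℚ[[T]]` by `φ_n ⋆ T^m = T^{nm}` (where `n = ∏ p_i^{e_i}`).
If `Λ ⋆ l(T) ∈ ℤ_{p_k}[[T]] ⊗ ℚ` for some `k` (bounded `p_k`-adic
denominators), where `l(T) = Σ_{n≥1} (-1)^{n-1} T^n/n`, then `φ_{p_k} - p_k`
divides `Λ` in `ℚ[φ_{p_1},…,φ_{p_s}]`. -/
theorem stmt_9 (s : ℕ) (P : Fin s → ℕ) (hP : ∀ i, (P i).Prime)
    (hinj : Function.Injective P)
    (k : Fin s) (Λ : MvPolynomial (Fin s) ℚ)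
    (hbound : ∃ j : ℕ, ∀ m : ℕ,
      ¬ P k ∣ ((P k : ℚ) ^ j *
        ∑ e ∈ Λ.support, Λ.coeff e *
          (if (e.prod fun i t => P i ^ t) ∣ m ∧ m ≠ 0
            then (-1 : ℚ) ^ (m / (e.prod fun i t => P i ^ t) - 1) /
              ((m / (e.prod fun i t => P i ^ t) : ℕ) : ℚ)
            else 0)).den) :
    (MvPolynomial.X k - MvPolynomial.C (P k : ℚ)) ∣ Λ := by
  obtain ⟨j, hb⟩ := hbound
  have hpp := hP k
  set D := Λ.support.sup fun e => e k with hD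
  have hpQ : ((P k:ℚ)) ≠ 0 := by exact_mod_cast hpp.pos.ne'
  -- Step A
  have hA : ∀ q N : ℕ, 0 < q → D < N →
      (∑ e ∈ Λ.support, Λ.coeff e *
          (if (e.prod fun i t => P i ^ t) ∣ (q * P k ^ N) ∧ (q * P k ^ N) ≠ 0
            then (-1 : ℚ) ^ ((q * P k ^ N) / (e.prod fun i t => P i ^ t) - 1) /
              (((q * P k ^ N) / (e.prod fun i t => P i ^ t) : ℕ) : ℚ)
            else 0))
      = Sq P k Λ q / ((q:ℚ) * (P k:ℚ)^N) := by
    intro q N hq hDN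
    rw [Sq, Finset.sum_div]
    refine Finset.sum_congr rfl fun e he => ?_
    have h1 : e k ≤ D := Finset.le_sup (f := fun e : Fin s →₀ ℕ => e k) he
    rw [termEq P hP hinj k q N hq e (lt_of_le_of_lt h1 hDN), mul_div_assoc]
  -- Step B
  have hS : ∀ q : ℕ, 0 < q → Sq P k Λ q = 0 := by
    intro q hq
    by_contra hSne
    have hqQ : ((q:ℚ)) ≠ 0 := by exact_mod_cast hq.ne'
    set A : ℚ := (P k:ℚ)^j * Sq P k Λ q / q with hA_def
    have hAne : A ≠ 0 :=
      div_ne_zero (mul_ne_zero (pow_ne_zero _ hpQ) hSne) hqQ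
    set N := max (D+1) A.num.natAbs with hNdef
    have hDN : D < N := lt_of_lt_of_le (Nat.lt_succ_self D) (le_max_left _ _)
    have hnum : A.num.natAbs < P k ^ N :=
      calc A.num.natAbs ≤ N := le_max_right _ _
        _ < 2 ^ N := Nat.lt_two_pow_self
        _ ≤ P k ^ N := Nat.pow_le_pow_left hpp.two_le N
    have hb' := hb (q * P k ^ N)
    rw [hA q N hq hDN] at hb'
    set B : ℚ := (P k:ℚ)^j * (Sq P k Λ q / ((q:ℚ) * (P k:ℚ)^N)) with hBdef
    have hAB : A = B * (P k:ℚ)^N := by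
      rw [hBdef, hA_def]
      field_simp
    have hAden : ((A.den:ℚ)) ≠ 0 := by exact_mod_cast A.den_nz
    have hBden : ((B.den:ℚ)) ≠ 0 := by exact_mod_cast B.den_nz
    have e1 : (A.num : ℚ) = A * A.den := (div_eq_iff hAden).mp (Rat.num_div_den A)
    have e2 : (B.num : ℚ) = B * B.den := (div_eq_iff hBden).mp (Rat.num_div_den B)
    have e3 : (A.num : ℚ) * B.den = B.num * (P k:ℚ)^N * A.den := by
      rw [e1, e2, hAB]; ring
    have e4 : A.num * (B.den:ℤ) = B.num * (P k:ℤ)^N * A.den := by exact_mod_cast e3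
    have e5 : ((P k:ℤ))^N ∣ A.num * B.den := ⟨B.num * A.den, by rw [e4]; ring⟩
    have e6 : P k ^ N ∣ A.num.natAbs * B.den := by
      have h := Int.natAbs_dvd_natAbs.mpr e5
      simpa [Int.natAbs_mul, Int.natAbs_pow] using h
    have hcop : Nat.Coprime (P k ^ N) B.den :=
      Nat.Coprime.pow_left N (hpp.coprime_iff_not_dvd.mpr hb')
    have e7 : P k ^ N ∣ A.num.natAbs := hcop.dvd_of_dvd_mul_right e6
    have hle : P k ^ N ≤ A.num.natAbs :=
      Nat.le_of_dvd (Int.natAbs_pos.mpr (Rat.num_ne_zero.mpr hAne)) e7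
    omega
  -- Step C
  have hT : ∀ q : ℕ, 0 < q → Tq P k Λ q = 0 := by
    intro q
    induction q using Nat.strong_induction_on with
    | _ q IH =>
    intro hq
    have hSq := hS q hq
    have key : ∀ e : Fin s →₀ ℕ,
        (if Mfun P k ⇑e ∣ q then eps (P k) (q / Mfun P k ⇑e) * (Mfun P k ⇑e) * (P k:ℚ) ^ (e k) else 0)
        = (if Mfun P k ⇑e = q then eps (P k) 1 * q * (P k:ℚ)^(e k) else 0)
          + ∑ d ∈ q.properDivisors,
              (if Mfun P k ⇑e = d then eps (P k) (q/d) * d * (P k:ℚ)^(e k) else 0) := by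
      intro e
      by_cases h1 : Mfun P k ⇑e = q
      · rw [if_pos (dvd_of_eq h1), if_pos h1, h1, Nat.div_self hq,
          Finset.sum_eq_zero (fun d hd => if_neg (by
            intro h2
            have hlt := (Nat.mem_properDivisors.mp hd).2
            omega)), add_zero]
      · by_cases h2 : Mfun P k ⇑e ∣ q
        · rw [if_pos h2, if_neg h1, zero_add, Finset.sum_ite_eq,
            if_pos (Nat.mem_properDivisors.mpr ⟨h2, Nat.lt_of_le_of_ne (Nat.le_of_dvd hq h2) h1⟩)]
        · rw [if_neg h2, if_neg h1, zero_add,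
            Finset.sum_eq_zero (fun d hd => if_neg (by
              intro h3
              exact h2 (h3 ▸ (Nat.mem_properDivisors.mp hd).1)))]
    have hsplit : Sq P k Λ q = eps (P k) 1 * q * Tq P k Λ q
        + ∑ d ∈ q.properDivisors, eps (P k) (q/d) * d * Tq P k Λ d := by
      rw [Sq]
      calc (∑ e ∈ Λ.support, Λ.coeff e *
            (if Mfun P k ⇑e ∣ q then eps (P k) (q / Mfun P k ⇑e) * (Mfun P k ⇑e) * (P k:ℚ) ^ (e k) else 0))
          = ∑ e ∈ Λ.support, (Λ.coeff e * (if Mfun P k ⇑e = q then eps (P k) 1 * q * (P k:ℚ)^(e k) else 0)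
            + ∑ d ∈ q.properDivisors, Λ.coeff e * (if Mfun P k ⇑e = d then eps (P k) (q/d) * d * (P k:ℚ)^(e k) else 0)) := by
            refine Finset.sum_congr rfl fun e _ => ?_
            rw [key e, mul_add, Finset.mul_sum]
        _ = (∑ e ∈ Λ.support, Λ.coeff e * (if Mfun P k ⇑e = q then eps (P k) 1 * q * (P k:ℚ)^(e k) else 0))
            + ∑ d ∈ q.properDivisors, ∑ e ∈ Λ.support, Λ.coeff e * (if Mfun P k ⇑e = d then eps (P k) (q/d) * d * (P k:ℚ)^(e k) else 0) := by
            rw [Finset.sum_add_distrib, Finset.sum_comm]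
        _ = eps (P k) 1 * q * Tq P k Λ q
            + ∑ d ∈ q.properDivisors, eps (P k) (q/d) * d * Tq P k Λ d := by
            congr 1
            · rw [Tq, Finset.mul_sum]
              refine Finset.sum_congr rfl fun e _ => ?_
              split_ifs <;> ring
            · refine Finset.sum_congr rfl fun d _ => ?_
              rw [Tq, Finset.mul_sum]
              refine Finset.sum_congr rfl fun e _ => ?_
              split_ifs <;> ring
    rw [hsplit, Finset.sum_eq_zero, add_zero] at hSq
    · have heps : eps (P k) 1 ≠ 0 := by
        rw [eps]; split_ifs <;> simp
      have hqQ : ((q:ℚ)) ≠ 0 := by exact_mod_cast hq.ne'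
      rcases mul_eq_zero.mp hSq with h | h
      · rcases mul_eq_zero.mp h with h' | h'
        · exact absurd h' heps
        · exact absurd h' hqQ
      · exact h
    · intro d hd
      obtain ⟨hdvd, hlt⟩ := Nat.mem_properDivisors.mp hd
      rw [IH d hlt (Nat.pos_of_dvd_of_pos hdvd hq), mul_zero]
  -- Step D
  have hzero : MvPolynomial.aeval
      (fun i => if i = k then MvPolynomial.C ((P k:ℚ)) else MvPolynomial.X i) Λ = 0 := by
    set σ : Fin s → MvPolynomial (Fin s) ℚ :=
      fun i => if i = k then MvPolynomial.C ((P k:ℚ)) else MvPolynomial.X i with hσ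
    have hrepr : MvPolynomial.aeval σ Λ
        = ∑ e ∈ Λ.support, MvPolynomial.monomial (Finsupp.erase k e) (Λ.coeff e * (P k:ℚ)^(e k)) := by
      conv_lhs => rw [Λ.as_sum]
      rw [map_sum]
      refine Finset.sum_congr rfl fun e _ => ?_
      rw [MvPolynomial.aeval_monomial]
      have hprod : (e.prod fun i n => σ i ^ n)
          = MvPolynomial.C ((P k:ℚ)^(e k)) * MvPolynomial.monomial (Finsupp.erase k e) 1 := by
        rw [Finsupp.prod_fintype _ _ (fun i => pow_zero _)]
        rw [← Finset.mul_prod_erase Finset.univ (fun i => σ i ^ e i) (Finset.mem_univ k)]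
        have h1 : σ k ^ e k = MvPolynomial.C ((P k:ℚ)^(e k)) := by
          rw [hσ]; simp
        have h2 : (∏ i ∈ Finset.univ.erase k, σ i ^ e i)
            = MvPolynomial.monomial (Finsupp.erase k e) 1 := by
          rw [MvPolynomial.monomial_eq, map_one, one_mul]
          have hsub : (Finsupp.erase k e).support ⊆ Finset.univ.erase k := by
            rw [Finsupp.support_erase]
            exact Finset.erase_subset_erase k (Finset.subset_univ _)
          rw [Finsupp.prod_of_support_subset _ hsub (fun i n => MvPolynomial.X i ^ n)
            (fun i _ => pow_zero _)]
          refine Finset.prod_congr rfl fun i hi => ?_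
          have hik := (Finset.mem_erase.mp hi).1
          have herase : (Finsupp.erase k e) i = e i := Finsupp.erase_ne hik
          rw [hσ, herase]
          simp [hik]
        rw [h1, h2]
      rw [hprod, MvPolynomial.algebraMap_eq, ← mul_assoc, ← MvPolynomial.C_mul,
        MvPolynomial.C_mul_monomial, mul_one]
    rw [hrepr]
    apply MvPolynomial.ext
    intro d
    rw [MvPolynomial.coeff_sum, MvPolynomial.coeff_zero]
    simp only [MvPolynomial.coeff_monomial]
    by_cases hd0 : d k = 0
    · have hiff : ∀ e : Fin s →₀ ℕ, (Finsupp.erase k e = d) ↔ (Mfun P k ⇑e = Mfun P k ⇑d) := by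
        intro e
        constructor
        · intro h
          simp only [Mfun]
          refine Finset.prod_congr rfl fun i hi => ?_
          have hik := (Finset.mem_erase.mp hi).1
          have hei : e i = d i := by
            have h1 : (Finsupp.erase k e) i = e i := Finsupp.erase_ne hik
            rw [← h1, h]
          rw [hei]
        · intro h
          ext i
          by_cases hik : i = k
          · subst hik; rw [Finsupp.erase_same, hd0]
          · rw [Finsupp.erase_ne hik]
            have he := L2 P hP hinj (Finset.univ.erase k) ⇑e i (Finset.mem_erase.mpr ⟨hik, Finset.mem_univ i⟩)
            have hdd := L2 P hP hinj (Finset.univ.erase k) ⇑d i (Finset.mem_erase.mpr ⟨hik, Finset.mem_univ i⟩)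
            simp only [Mfun] at h
            rw [← he, ← hdd, h]
      have : (∑ e ∈ Λ.support, if Finsupp.erase k e = d then Λ.coeff e * (P k:ℚ)^(e k) else 0)
          = Tq P k Λ (Mfun P k ⇑d) := by
        rw [Tq]
        refine Finset.sum_congr rfl fun e _ => ?_
        rw [if_congr (hiff e) rfl rfl]
        split_ifs <;> ring
      rw [this, hT _ (Mfun_pos P hP k ⇑d)]
    · apply Finset.sum_eq_zero
      intro e _
      rw [if_neg]
      intro h
      apply hd0
      rw [← h, Finsupp.erase_same]
  exact L1 k (P k : ℚ) Λ hzero
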